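/- Let a group Γ act on a finite group N = S × T (internal direct product of Γ-stable subgroups S, T) by group automorphisms, and let Γ also act on a commutative ring R by ring automorphisms, so that Γ acts on the group ring R[N]. If Γ acts trivially on T, then the fixed subring R[N]^Γ equals the group ring (R[S]^Γ)[T]. -/

import Mathlib

/-- If `Γ` acts on `R[N]` diagonally (by ring automorphisms of `R`
and group automorphisms of `N = S × T`, trivially on `T`), then the fixed
subring `R[N]^Γ` is the group ring `(R[S]^Γ)[T]`, i.e. the subring generated by
the fixed elements supported on `S` together with the elements of `T`. -/
theorem stmt2 {R : Type*} [CommRing R] {N : Type*} [Group N] [Finite N]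
    {Γ : Type*} [Group Γ]
    (φ : Γ →* RingAut R) (ψ : Γ →* MulAut N)
    (S T : Subgroup N)
    (hSψ : ∀ γ : Γ, ∀ s ∈ S, ψ γ s ∈ S)
    (hTψ : ∀ γ : Γ, ∀ t ∈ T, ψ γ t ∈ T)
    (hTtriv : ∀ γ : Γ, ∀ t ∈ T, ψ γ t = t)
    (hST : ∀ n : N, ∃! st : S × T, (st.1 : N) * (st.2 : N) = n)
    (ρ : Γ →* RingAut (MonoidAlgebra R N))
    (hρ : ∀ (γ : Γ) (r : R) (n : N),
      ρ γ (MonoidAlgebra.single n r) = MonoidAlgebra.single (ψ γ n) (φ γ r)) :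
    {x : MonoidAlgebra R N | ∀ γ : Γ, ρ γ x = x} =
      (Subring.closure
        ({x : MonoidAlgebra R N | (∀ γ : Γ, ρ γ x = x) ∧ ∀ n : N, n ∉ S → x.coeff n = 0}
          ∪ {x : MonoidAlgebra R N | ∃ t ∈ T, x = MonoidAlgebra.single t 1}) :
        Set (MonoidAlgebra R N)) := by
  classical
  haveI : Fintype N := Fintype.ofFinite N
  -- every element is the full sum of singles
  have hxsum : ∀ z : MonoidAlgebra R N, z = ∑ n : N, MonoidAlgebra.single n (z.coeff n) := by
    intro z
    conv_lhs => rw [← MonoidAlgebra.sum_coeff_single z]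
    rw [Finsupp.sum_fintype]
    intro n; simp
  -- evaluating a full sum of singles
  have heval : ∀ (c : N → R) (n : N),
      (∑ m : N, MonoidAlgebra.single m (c m)).coeff n = c n := by
    intro c n
    rw [MonoidAlgebra.coeff_sum, Finsupp.finset_sum_apply]
    simp [Finsupp.single_apply]
  -- key equivariance of coefficients
  have key : ∀ x : MonoidAlgebra R N, (∀ γ, ρ γ x = x) →
      ∀ (γ : Γ) (n : N), x.coeff (ψ γ n) = φ γ (x.coeff n) := by
    intro x hx γ n
    have hexp : ρ γ x = ∑ m : N, MonoidAlgebra.single (ψ γ m) (φ γ (x.coeff m)) := by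
      conv_lhs => rw [hxsum x]
      rw [map_sum]
      exact Finset.sum_congr rfl fun m _ => hρ γ (x.coeff m) m
    have h2 : ρ γ x = ∑ m : N, MonoidAlgebra.single m (φ γ (x.coeff ((ψ γ)⁻¹ m))) := by
      rw [hexp]
      exact Fintype.sum_bijective (ψ γ) (ψ γ).bijective _ _ (by simp)
    have := congrArg (fun f : MonoidAlgebra R N => f.coeff (ψ γ n)) ((hx γ).symm.trans h2)
    simpa [heval, -MonoidAlgebra.coeff_sum] using this
  ext x
  constructor
  · -- fixed ⇒ in closure
    intro hx
    set y : T → MonoidAlgebra R N :=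
      fun t => ∑ s : S, MonoidAlgebra.single (s : N) (x.coeff ((s : N) * t)) with hy
    have hbij : Function.Bijective (fun st : S × T => (st.1 : N) * (st.2 : N)) := by
      constructor
      · intro a b hab
        obtain ⟨st, -, huniq⟩ := hST ((a.1 : N) * a.2)
        exact (huniq a rfl).trans (huniq b hab.symm).symm
      · intro n
        obtain ⟨st, h, -⟩ := hST n
        exact ⟨st, h⟩
    have hdecomp : x = ∑ t : T, y t * MonoidAlgebra.single (t : N) 1 := by
      calc x = ∑ n : N, MonoidAlgebra.single n (x.coeff n) := hxsum x
        _ = ∑ st : S × T, MonoidAlgebra.single ((st.1 : N) * st.2) (x.coeff ((st.1 : N) * st.2)) :=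
          (Fintype.sum_bijective _ hbij _ _ fun st => rfl).symm
        _ = ∑ t : T, ∑ s : S, MonoidAlgebra.single ((s : N) * t) (x.coeff ((s : N) * t)) := by
          rw [Fintype.sum_prod_type]; exact Finset.sum_comm
        _ = ∑ t : T, y t * MonoidAlgebra.single (t : N) 1 := by
          refine Finset.sum_congr rfl fun t _ => ?_
          rw [hy, Finset.sum_mul]
          exact Finset.sum_congr rfl fun s _ => by
            rw [MonoidAlgebra.single_mul_single, mul_one]
    rw [hdecomp]
    refine Subring.sum_mem _ fun t _ => Subring.mul_mem _ ?_ ?_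
    · refine Subring.subset_closure (Or.inl ⟨?_, ?_⟩)
      · -- y t is fixed
        intro γ
        have : ρ γ (y t) = ∑ s : S,
            MonoidAlgebra.single ((⟨ψ γ s, hSψ γ s s.2⟩ : S) : N)
              (x.coeff (((⟨ψ γ s, hSψ γ s s.2⟩ : S) : N) * t)) := by
          rw [hy, map_sum]
          refine Finset.sum_congr rfl fun s _ => ?_
          rw [hρ]
          congr 1
          rw [← key x hx γ ((s : N) * t)]
          congr 1
          rw [map_mul, hTtriv γ t t.2]
        rw [this]
        have hσ : Function.Bijective (fun s : S => (⟨ψ γ s, hSψ γ s s.2⟩ : S)) := by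
          have hinj : Function.Injective (fun s : S => (⟨ψ γ s, hSψ γ s s.2⟩ : S)) := by
            intro a b hab
            have : (ψ γ) (a : N) = (ψ γ) (b : N) := congrArg Subtype.val hab
            exact Subtype.ext ((ψ γ).injective this)
          exact Finite.injective_iff_bijective.mp hinj
        exact Fintype.sum_bijective _ hσ _ _ (fun s => rfl)
      · -- y t supported on S
        intro n hn
        rw [hy, MonoidAlgebra.coeff_sum, Finsupp.finset_sum_apply]
        refine Finset.sum_eq_zero fun s _ => ?_
        rw [MonoidAlgebra.coeff_single, Finsupp.single_apply, if_neg]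
        intro h; exact hn (h ▸ s.2)
    · exact Subring.subset_closure (Or.inr ⟨t, t.2, rfl⟩)
  · -- closure ⊆ fixed
    intro hx
    let F : Subring (MonoidAlgebra R N) :=
      { carrier := {x | ∀ γ : Γ, ρ γ x = x}
        zero_mem' := fun γ => map_zero _
        one_mem' := fun γ => map_one _
        add_mem' := fun ha hb γ => by rw [map_add, ha γ, hb γ]
        mul_mem' := fun ha hb γ => by rw [map_mul, ha γ, hb γ]
        neg_mem' := fun ha γ => by rw [map_neg, ha γ] }
    have hclF : Subring.closure
        ({x : MonoidAlgebra R N | (∀ γ : Γ, ρ γ x = x) ∧ ∀ n : N, n ∉ S → x.coeff n = 0}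
          ∪ {x : MonoidAlgebra R N | ∃ t ∈ T, x = MonoidAlgebra.single t 1}) ≤ F := by
      rw [Subring.closure_le]
      rintro z (⟨hz, -⟩ | ⟨t, ht, rfl⟩)
      · exact hz
      · intro γ
        rw [hρ, hTtriv γ t ht, map_one]
    exact hclF hx
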